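/- For the points Q_k generated by the new algorithm at parameter t ∈ (0,1), each Q_k lies in the convex hull of the control points {W_0, …, W_k}; in particular the computed curve point R_n(t) = Q_n lies in the convex hull of all control points. -/

import Mathlib

open Finset

theorem stmt12 (n d : ℕ) (t : ℝ) (ht : t ∈ Set.Ioo (0 : ℝ) 1)
    (ω : ℕ → ℝ) (W : ℕ → Fin d → ℝ) (hω : ∀ k ≤ n, 0 < ω k)
    (h : ℕ → ℝ) (Q : ℕ → Fin d → ℝ)
    (hh0 : h 0 = 1) (hQ0 : Q 0 = W 0)
    (hh : ∀ k, 1 ≤ k → k ≤ n →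
      h k = ω k * h (k - 1) * t * ((n - k + 1 : ℕ) : ℝ) /
        (ω (k - 1) * (k : ℝ) * (1 - t) +
          ω k * h (k - 1) * t * ((n - k + 1 : ℕ) : ℝ)))
    (hQ : ∀ k, 1 ≤ k → k ≤ n → Q k = (1 - h k) • Q (k - 1) + h k • W k) :
    (∀ k ≤ n, Q k ∈ convexHull ℝ (W '' Set.Iic k)) ∧
      Q n ∈ convexHull ℝ (W '' Set.Iic n) := by
  obtain ⟨ht0, ht1⟩ := ht
  have key : ∀ k ≤ n, (0 ≤ h k ∧ h k ≤ 1) ∧ Q k ∈ convexHull ℝ (W '' Set.Iic k) := by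
    intro k
    induction k with
    | zero =>
      intro _
      refine ⟨⟨by rw [hh0]; norm_num, le_of_eq hh0⟩, ?_⟩
      rw [hQ0]
      exact subset_convexHull ℝ _ ⟨0, Set.self_mem_Iic, rfl⟩
    | succ k ih =>
      intro hk
      have hk' : k ≤ n := Nat.le_of_succ_le hk
      obtain ⟨⟨hnn, _⟩, hQmem⟩ := ih hk'
      have hrec := hh (k + 1) (Nat.le_add_left 1 k) hk
      simp only [Nat.add_sub_cancel] at hrec
      have hb : 0 < ω k * ((k + 1 : ℕ) : ℝ) * (1 - t) := by
        apply mul_pos (mul_pos (hω k hk') _) (by linarith)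
        positivity
      have ha : 0 ≤ ω (k + 1) * h k * t * ((n - (k + 1) + 1 : ℕ) : ℝ) := by
        have := hω (k + 1) hk
        positivity
      have hden : 0 < ω k * ((k + 1 : ℕ) : ℝ) * (1 - t) +
          ω (k + 1) * h k * t * ((n - (k + 1) + 1 : ℕ) : ℝ) := by linarith
      have h0' : 0 ≤ h (k + 1) := by rw [hrec]; positivity
      have h1' : h (k + 1) ≤ 1 := by
        rw [hrec, div_le_one hden]; linarith
      refine ⟨⟨h0', h1'⟩, ?_⟩
      rw [hQ (k + 1) (Nat.le_add_left 1 k) hk]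
      simp only [Nat.add_sub_cancel]
      have hmem1 : Q k ∈ convexHull ℝ (W '' Set.Iic (k + 1)) :=
        convexHull_mono (Set.image_mono (Set.Iic_subset_Iic.2 (Nat.le_succ k))) hQmem
      have hmem2 : W (k + 1) ∈ convexHull ℝ (W '' Set.Iic (k + 1)) :=
        subset_convexHull ℝ _ ⟨k + 1, Set.self_mem_Iic, rfl⟩
      exact (convex_convexHull ℝ _) hmem1 hmem2 (by linarith) h0' (by ring)
  exact ⟨fun k hk => (key k hk).2, (key n le_rfl).2⟩
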